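/- Let $w_1,\dots,w_\kappa$ be nonnegative reals summing to $1$, let $G(s) = \frac{1}{\kappa}\sum_i e^{-w_i\kappa s}$, and let $\epsilon = 1 - G(1/2)$. If $\epsilon > 0$ then $G(1/2) - G(1) \ge \epsilon^{5/\epsilon}$. -/

import Mathlib

lemma stmt6_aux (ε : ℝ) (hεpos : 0 < ε) (heps04 : ε ≤ 0.4) :
    ε ^ (5/ε) ≤ Real.exp (-(1/ε)) * ε / 2 := by
  rw [Real.rpow_def_of_pos hεpos]
  have hεhalf : Real.exp (-(1/ε)) * ε / 2 = Real.exp (-(1/ε) + Real.log ε - Real.log 2) := by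
    rw [Real.exp_sub, Real.exp_add, Real.exp_log hεpos, Real.exp_log (by norm_num : (0:ℝ) < 2)]
  rw [hεhalf]
  apply Real.exp_le_exp.mpr
  have hlog2 : (0.6931471803 : ℝ) < Real.log 2 := Real.log_two_gt_d9
  have hlogε : Real.log ε ≤ -Real.log 2 := by
    have h1 : Real.log ε ≤ Real.log (1/2) := Real.log_le_log hεpos (by linarith)
    simpa [one_div, Real.log_inv] using h1
  have key : 5 * Real.log ε ≤ (-(1/ε) + Real.log ε - Real.log 2) * ε := by
    have h0 : 1/ε*ε = 1 := one_div_mul_cancel (ne_of_gt hεpos)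
    have hexp : (-(1/ε) + Real.log ε - Real.log 2) * ε
        = -(1/ε*ε) + Real.log ε * ε - Real.log 2 * ε := by ring
    rw [hexp, h0]
    nlinarith [mul_nonneg (by linarith : (0:ℝ) ≤ 0.4 - ε) (by linarith : (0:ℝ) ≤ -Real.log ε),
      mul_nonneg (by linarith : (0:ℝ) ≤ 0.4 - ε) (by linarith : (0:ℝ) ≤ Real.log 2)]
  calc Real.log ε * (5/ε) = (5 * Real.log ε) / ε := by ring
    _ ≤ ((-(1/ε) + Real.log ε - Real.log 2) * ε) / ε := by gcongr
    _ = -(1/ε) + Real.log ε - Real.log 2 := by field_simp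

theorem stmt6 (κ : ℕ) (hκ : 0 < κ) (w : Fin κ → ℝ) (hw : ∀ i, 0 ≤ w i)
    (hsum : ∑ i, w i = 1) (G : ℝ → ℝ)
    (hG : ∀ s, G s = (1 / κ) * ∑ i, Real.exp (-(w i * κ * s)))
    (ε : ℝ) (hε : ε = 1 - G (1 / 2)) (hεpos : 0 < ε) :
    G (1 / 2) - G 1 ≥ ε ^ (5 / ε) := by
  have hκR : (0:ℝ) < κ := by exact_mod_cast hκ
  set b : Fin κ → ℝ := fun i => Real.exp (-(w i * κ * (1/2))) with hbdef
  have hb_pos : ∀ i, 0 < b i := fun i => Real.exp_pos _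
  have hb_le : ∀ i, b i ≤ 1 := by
    intro i
    apply Real.exp_le_one_iff.mpr
    have := hw i
    nlinarith [hκR.le]
  -- G(1/2) in terms of b
  have hGhalf : G (1/2) = (1/κ) * ∑ i, b i := hG (1/2)
  have hsumb : ∑ i, b i = κ * (1 - ε) := by
    rw [hε, hGhalf]; field_simp; ring
  -- G(1) via squares
  have hGone : G 1 = (1/κ) * ∑ i, b i * b i := by
    rw [hG 1]
    congr 1
    apply Finset.sum_congr rfl
    intro i _
    rw [hbdef, ← Real.exp_add]
    congr 1
    ring
  -- Jensen: exp(-1/2) ≤ G(1/2)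
  have hjensen : Real.exp (-(1/2)) ≤ G (1/2) := by
    have h := convexOn_exp.map_sum_le (t := Finset.univ) (w := fun _ : Fin κ => 1/(κ:ℝ))
      (p := fun i => -(w i * κ * (1/2)))
      (fun i _ => by positivity)
      (by rw [Finset.sum_const]; simp; field_simp)
      (fun i _ => Set.mem_univ _)
    have hκ0 : (κ:ℝ) ≠ 0 := ne_of_gt hκR
    have harg : ∑ i, (1/(κ:ℝ)) • (-(w i * κ * (1/2))) = -(1/2) := by
      simp only [smul_eq_mul]
      calc ∑ x, 1/(κ:ℝ) * -(w x * κ * (1/2)) = ∑ x, w x * (-(1/2)) := by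
            apply Finset.sum_congr rfl; intro x _; field_simp
        _ = -(1/2) := by rw [← Finset.sum_mul, hsum]; ring
    rw [harg] at h
    rw [hGhalf, Finset.mul_sum]
    simpa [smul_eq_mul, hbdef] using h
  -- bound ε ≤ 1 - exp(-1/2) ≤ 0.4
  have heps04 : ε ≤ 0.4 := by
    have h1 : Real.exp (-(1/2)) * Real.exp (1/2) = 1 := by
      rw [← Real.exp_add]; norm_num
    have h2 : Real.exp (1/2) * Real.exp (1/2) = Real.exp 1 := by
      rw [← Real.exp_add]; norm_num
    have h3 : Real.exp 1 < 2.7182818286 := Real.exp_one_lt_d9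
    have h4 : (0:ℝ) < Real.exp (1/2) := Real.exp_pos _
    have h5 : (0.6 : ℝ) ≤ Real.exp (-(1/2)) := by nlinarith
    have := hjensen
    rw [hε]; linarith
  have hepslt1 : ε < 1 := by linarith
  -- key sum bound
  set T : Finset (Fin κ) := Finset.univ.filter (fun i => w i * κ ≤ 2/ε) with hT
  have hcard : (Tᶜ.card : ℝ) * (2/ε) ≤ κ := by
    have h1 : (Tᶜ.card : ℝ) * (2/ε) ≤ ∑ i ∈ Tᶜ, w i * κ := by
      have := Finset.card_nsmul_le_sum Tᶜ (fun i => w i * κ) (2/ε) ?_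
      · rw [nsmul_eq_mul] at this; exact_mod_cast this
      · intro i hi
        rw [Finset.mem_compl, hT, Finset.mem_filter] at hi
        push_neg at hi
        exact (hi (Finset.mem_univ i)).le
    have h2 : ∑ i ∈ Tᶜ, w i * κ ≤ ∑ i, w i * κ := by
      apply Finset.sum_le_sum_of_subset_of_nonneg (Finset.subset_univ _)
      intro i _ _
      exact mul_nonneg (hw i) hκR.le
    have h3 : ∑ i, w i * κ = κ := by rw [← Finset.sum_mul, hsum]; ring
    linarith
  have hcard' : (Tᶜ.card : ℝ) ≤ κ * ε / 2 := by
    have h2 : (2/ε) * ε = 2 := div_mul_cancel₀ 2 (ne_of_gt hεpos)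
    nlinarith [mul_le_mul_of_nonneg_right hcard hεpos.le]
  have hbT : ∀ i ∈ T, Real.exp (-(1/ε)) ≤ b i := by
    intro i hi
    rw [hT, Finset.mem_filter] at hi
    apply Real.exp_le_exp.mpr
    have h1 := hi.2
    have h2 : (2/ε) * (1/2) = 1/ε := by ring
    nlinarith
  -- sum over T of (1 - b i) ≥ κ ε / 2
  have hsplit : ∑ i ∈ T, (1 - b i) ≥ κ * ε / 2 := by
    have hall : ∑ i, (1 - b i) = κ * ε := by
      rw [Finset.sum_sub_distrib, hsumb, Finset.sum_const]
      simp; ring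
    have hcompl : ∑ i ∈ Tᶜ, (1 - b i) ≤ (Tᶜ.card : ℝ) := by
      calc ∑ i ∈ Tᶜ, (1 - b i) ≤ ∑ i ∈ Tᶜ, 1 := by
            apply Finset.sum_le_sum; intro i _; have := hb_pos i; linarith
        _ = (Tᶜ.card : ℝ) := by simp
    have hTC : ∑ i ∈ T, (1 - b i) + ∑ i ∈ Tᶜ, (1 - b i) = κ * ε := by
      rw [Finset.sum_add_sum_compl, hall]
    linarith
  have hkey : ∑ i, b i * (1 - b i) ≥ Real.exp (-(1/ε)) * (κ * ε / 2) := by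
    have h1 : ∑ i ∈ T, b i * (1 - b i) ≤ ∑ i, b i * (1 - b i) := by
      apply Finset.sum_le_sum_of_subset_of_nonneg (Finset.subset_univ _)
      intro i _ _
      have := hb_pos i; have := hb_le i; nlinarith
    have h2 : Real.exp (-(1/ε)) * (κ * ε / 2) ≤ ∑ i ∈ T, b i * (1 - b i) := by
      calc Real.exp (-(1/ε)) * (κ * ε / 2) ≤ Real.exp (-(1/ε)) * ∑ i ∈ T, (1 - b i) := by
            apply mul_le_mul_of_nonneg_left hsplit (Real.exp_pos _).le
        _ = ∑ i ∈ T, Real.exp (-(1/ε)) * (1 - b i) := by rw [Finset.mul_sum]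
        _ ≤ ∑ i ∈ T, b i * (1 - b i) := by
            apply Finset.sum_le_sum
            intro i hi
            have h1 := hb_le i
            exact mul_le_mul_of_nonneg_right (hbT i hi) (by linarith)
    linarith
  -- hence G(1/2) - G(1) ≥ exp(-1/ε) * ε/2
  have hdiff : G (1/2) - G 1 ≥ Real.exp (-(1/ε)) * ε / 2 := by
    rw [hGhalf, hGone]
    have : (1/(κ:ℝ)) * ∑ i, b i - (1/κ) * ∑ i, b i * b i
        = (1/κ) * ∑ i, b i * (1 - b i) := by
      rw [← mul_sub, ← Finset.sum_sub_distrib]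
      congr 1
      apply Finset.sum_congr rfl
      intro i _
      ring
    rw [this]
    have := hkey
    rw [ge_iff_le, ← sub_nonneg]
    have hrw : 1/(κ:ℝ) * ∑ i, b i * (1 - b i) - Real.exp (-(1/ε)) * ε / 2
        = (1/κ) * (∑ i, b i * (1 - b i) - Real.exp (-(1/ε)) * (κ * ε / 2)) := by
      field_simp
    rw [hrw]
    apply mul_nonneg (by positivity)
    linarith
  have hfin : ε ^ (5/ε) ≤ Real.exp (-(1/ε)) * ε / 2 := stmt6_aux ε hεpos heps04
  linarith
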